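/- arXiv:math/9606232 — 2 statements merged into one kernel-verified Lean document; each statement's English description precedes it below -/
import Mathlib

section
/- If F is an irredundant family and G generates F (i.e., every member of F is a nonempty union of members of G), then |F| ≤ |G|. -/
open scoped Classical

variable {α : Type*}

/-- A finite family of sets is irredundant if its members can be arranged in a
sequence such that each set contains a point not in any of the preceding sets. -/
def Irredundant (F : Finset (Set α)) : Prop :=
  ∃ l : List (Set α), l.Nodup ∧ l.toFinset = F ∧
    ∀ i : Fin l.length, ∃ x ∈ l.get i, ∀ j : Fin l.length, j < i → x ∉ l.get j

/-- `G` generates `F` if every member of `F` is a nonempty union of members of `G`. -/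
def Generates (G F : Finset (Set α)) : Prop :=
  ∀ f ∈ F, ∃ H : Finset (Set α), H ⊆ G ∧ H.Nonempty ∧ f = ⋃₀ ↑H

/-- If `F` is irredundant and `G` generates `F`, then `|F| ≤ |G|`. -/
theorem card_le_of_generates (F G : Finset (Set α)) (hF : Irredundant F)
    (hG : Generates G F) : F.card ≤ G.card := by
  obtain ⟨l, hnd, hlF, hwit⟩ := hF
  -- For each i, choose a witness point x i
  choose x hx hxnot using hwit
  -- For each i, l.get i ∈ F, so it has a generating subfamily H i
  have hmem : ∀ i : Fin l.length, l.get i ∈ F := by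
    intro i
    rw [← hlF, List.mem_toFinset]
    exact l.get_mem _
  choose H hHsub hHne hHeq using fun i => hG (l.get i) (hmem i)
  -- For each i, x i belongs to some member g i of H i
  have hx' : ∀ i : Fin l.length, ∃ g ∈ H i, x i ∈ g := by
    intro i
    have := hx i
    rw [hHeq i] at this
    simpa using this
  choose g hgH hgx using hx'
  -- g is injective
  have hinj : Function.Injective g := by
    intro i j hij
    by_contra hne
    rcases lt_or_gt_of_ne (fun h : i = j => hne h) with h | h
    · -- i < j : x j ∈ g j = g i ⊆ l.get i, contradiction with x j ∉ l.get i
      apply hxnot j i h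
      rw [hHeq i]
      exact Set.mem_sUnion.2 ⟨g i, by simpa using hgH i, hij ▸ hgx j⟩
    · apply hxnot i j h
      rw [hHeq j]
      exact Set.mem_sUnion.2 ⟨g j, by simpa using hgH j, hij ▸ hgx i⟩
  have hcard : F.card = l.length := by
    rw [← hlF, List.toFinset_card_of_nodup hnd]
  rw [hcard]
  have : l.length = (Finset.univ : Finset (Fin l.length)).card := by simp
  rw [this]
  apply Finset.card_le_card_of_injOn g
  · intro i _
    exact hHsub i (hgH i)
  · exact hinj.injOn
end

section
/- Every minimal redundant finite family F₀ of sets satisfies: for every f ∈ F₀, f ⊆ ⋃(F₀ \ {f}); consequently every point of ⋃F₀ belongs to at least two members of F₀. -/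
open scoped Classical

variable {α : Type*}

/-- Every minimal redundant finite family `F₀` satisfies `f ⊆ ⋃ (F₀ \ {f})` for all
`f ∈ F₀`; consequently every point of `⋃ F₀` belongs to at least two members of `F₀`. -/
theorem minimal_redundant_doubly_covers (F₀ : Finset (Set α))
    (hred : ¬ Irredundant F₀) (hmin : ∀ F ⊂ F₀, Irredundant F) :
    (∀ f ∈ F₀, f ⊆ ⋃₀ ↑(F₀.erase f)) ∧
      ∀ x ∈ ⋃₀ (↑F₀ : Set (Set α)), 2 ≤ (F₀.filter (fun f => x ∈ f)).card := by
  have main : ∀ f ∈ F₀, f ⊆ ⋃₀ ↑(F₀.erase f) := by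
    intro f hf x hxf
    by_contra hx
    have hxn : ∀ g ∈ F₀.erase f, x ∉ g := by
      intro g hg hxg
      exact hx ⟨g, Finset.mem_coe.mpr hg, hxg⟩
    obtain ⟨l, hnd, htf, hseq⟩ := hmin (F₀.erase f) (Finset.erase_ssubset hf)
    apply hred
    refine ⟨l ++ [f], ?_, ?_, ?_⟩
    · refine List.Nodup.append hnd (List.nodup_singleton f) ?_
      intro a ha hb
      have : a ∈ F₀.erase f := by rw [← htf]; simpa using ha
      simp at hb
      subst hb
      exact (Finset.notMem_erase _ F₀) this
    · rw [List.toFinset_append, htf]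
      simp only [List.toFinset_cons, List.toFinset_nil, insert_empty_eq]
      ext a
      simp only [Finset.mem_union, Finset.mem_erase, Finset.mem_singleton]
      constructor
      · rintro (⟨_, h⟩ | rfl)
        · exact h
        · exact hf
      · intro h
        by_cases hae : a = f
        · exact Or.inr hae
        · exact Or.inl ⟨hae, h⟩
    · intro i
      have hmem : ∀ j : Fin (l ++ [f]).length, ∀ hj : (j : ℕ) < l.length,
          (l ++ [f]).get j = l.get ⟨j, hj⟩ := by
        intro j hj
        simp [List.getElem_append_left hj]
      by_cases hi : (i : ℕ) < l.length
      · obtain ⟨y, hy, hy'⟩ := hseq ⟨i, hi⟩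
        refine ⟨y, by rwa [hmem i hi], ?_⟩
        intro j hj
        have hjl : (j : ℕ) < l.length := lt_of_lt_of_le hj (le_of_lt hi)
        rw [hmem j hjl]
        exact hy' ⟨j, hjl⟩ hj
      · have hil : (i : ℕ) = l.length := by
          have := i.isLt
          simp at this
          omega
        have hif : (l ++ [f]).get i = f := by
          have : (l ++ [f])[(i : ℕ)] = f := by
            rw [List.getElem_append_right (by omega)]
            simp [hil]
          simpa using this
        refine ⟨x, by rwa [hif], ?_⟩
        intro j hj
        have hjl : (j : ℕ) < l.length := by
          have : (j : ℕ) < (i : ℕ) := hj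
          omega
        rw [hmem j hjl]
        apply hxn
        rw [← htf]
        exact List.mem_toFinset.mpr (List.get_mem _ _)
  refine ⟨main, ?_⟩
  rintro x ⟨f, hf, hxf⟩
  have hf' : f ∈ F₀ := hf
  obtain ⟨g, hg, hxg⟩ := main f hf' hxf
  have hg' : g ∈ F₀.erase f := Finset.mem_coe.mp hg
  rw [Nat.succ_le_iff, Finset.one_lt_card]
  exact ⟨f, Finset.mem_filter.mpr ⟨hf', hxf⟩,
    g, Finset.mem_filter.mpr ⟨Finset.mem_of_mem_erase hg', hxg⟩,
    fun h => Finset.ne_of_mem_erase hg' h.symm⟩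
end
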